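/- The Riesz representative of the averaging functional I_d on H_w is the function h_d^I(y) = 1 + (1/d) ∫_0^y (d − s∧d)/w(s) ds; that is, I_d(h) = ⟨h, h_d^I⟩_w for all h ∈ H_w. -/

import Mathlib

open MeasureTheory Real Set

/-- A Filipović weight function: measurable, increasing on `[0,∞)`, `w(0)=1`,
`w ≥ 1`, and `∫_0^∞ 1/w < ∞`. -/
structure FiliWeight (w : ℝ → ℝ) : Prop where
  meas : Measurable w
  mono : MonotoneOn w (Set.Ici 0)
  one_le : ∀ x, 0 ≤ x → 1 ≤ w x
  at_zero : w 0 = 1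
  int_inv : MeasureTheory.IntegrableOn (fun s => (w s)⁻¹) (Set.Ioi 0)

/-- Membership of `h` (with weak derivative `h'`) in the Filipović space `H_w`:
`h` is absolutely continuous on `[0,∞)` with derivative `h'` and finite weighted energy. -/
structure FiliMem (w : ℝ → ℝ) (h h' : ℝ → ℝ) : Prop where
  meas_deriv : Measurable h'
  abs_cont : ∀ x, 0 ≤ x → h x = h 0 + ∫ s in (0:ℝ)..x, h' s
  energy : MeasureTheory.IntegrableOn (fun y => (h' y)^2 * w y) (Set.Ioi 0)

/-- The inner product `⟨f,g⟩_w = f(0)g(0) + ∫_0^∞ f'(y)g'(y) w(y) dy` on `H_w`. -/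
noncomputable def filiInner (w f g f' g' : ℝ → ℝ) : ℝ :=
  f 0 * g 0 + ∫ y in Set.Ioi (0:ℝ), f' y * g' y * w y

/-- The squared norm `‖f‖_w^2 = |f(0)|^2 + ∫_0^∞ |f'(y)|^2 w(y) dy` on `H_w`. -/
noncomputable def filiNormSq (w f f' : ℝ → ℝ) : ℝ :=
  (f 0)^2 + ∫ y in Set.Ioi (0:ℝ), (f' y)^2 * w y

/-- the Riesz representative of `I_d` on `H_w` is
`h_d^I(y) = 1 + (1/d)∫_0^y (d − s∧d)/w(s) ds` (with weak derivative
`y ↦ (d − y∧d)/(d w(y))`): `I_d(h) = ⟨h, h_d^I⟩_w` for all `h ∈ H_w`. -/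
theorem statement5 (w : ℝ → ℝ) (hw : FiliWeight w) (d : ℝ) (hd : 0 < d)
    (h h' : ℝ → ℝ) (hh : FiliMem w h h') :
    (1 / d) * ∫ u in (0:ℝ)..d, h u
      = filiInner w h (fun y => 1 + (1 / d) * ∫ s in (0:ℝ)..y, (d - min s d) / w s)
          h' (fun y => (d - min y d) / (d * w y)) := by
  have hd0 : d ≠ 0 := ne_of_gt hd
  set μ := volume.restrict (Set.Ioc (0:ℝ) d) with hμ
  -- integrability of h' on Ioc 0 d
  have hen : IntegrableOn (fun y => (h' y)^2 * w y) (Set.Ioc 0 d) :=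
    hh.energy.mono_set Set.Ioc_subset_Ioi_self
  have hdom : IntegrableOn (fun y => 1 + (h' y)^2 * w y) (Set.Ioc 0 d) :=
    (integrableOn_const measure_Ioc_lt_top.ne).add hen
  have hinth' : IntegrableOn h' (Set.Ioc 0 d) := by
    refine hdom.mono' hh.meas_deriv.aestronglyMeasurable.restrict ?_
    filter_upwards [ae_restrict_mem measurableSet_Ioc] with s hs
    have h1 : |h' s| ≤ 1 + (h' s)^2 := by nlinarith [sq_nonneg (|h' s| - 1), sq_abs (h' s)]
    have h2 : (h' s)^2 ≤ (h' s)^2 * w s :=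
      le_mul_of_one_le_right (sq_nonneg _) (hw.one_le s hs.1.le)
    have : ‖h' s‖ = |h' s| := rfl
    rw [this]; linarith
  -- Fubini
  set K : ℝ → ℝ → ℝ := fun u s => if s ≤ u then h' s else 0 with hK
  have hKind : Function.uncurry K = Set.indicator {p : ℝ × ℝ | p.2 ≤ p.1} (fun p => h' p.2) := by
    funext p
    simp only [Function.uncurry, Set.indicator, Set.mem_setOf_eq, hK]
  have hKint : Integrable (Function.uncurry K) (μ.prod μ) := by
    rw [hKind]
    have hbase : Integrable (fun p : ℝ × ℝ => h' p.2) (μ.prod μ) := by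
      have := (integrable_const (1:ℝ) (μ := μ)).mul_prod hinth'
      simpa using this
    exact hbase.indicator (measurableSet_le measurable_snd measurable_fst)
  have hswap : ∫ u, ∫ s, K u s ∂μ ∂μ = ∫ s, ∫ u, K u s ∂μ ∂μ :=
    integral_integral_swap hKint
  -- inner integral left: F u
  set F : ℝ → ℝ := fun u => ∫ s in (0:ℝ)..u, h' s with hF
  have hleft : ∫ u, ∫ s, K u s ∂μ ∂μ = ∫ u in Set.Ioc (0:ℝ) d, F u := by
    refine setIntegral_congr_fun measurableSet_Ioc (fun u hu => ?_)
    have : (fun s => K u s) = Set.indicator (Set.Iic u) h' := by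
      funext s; simp [hK, Set.indicator, Set.mem_Iic]
    rw [this, hμ, setIntegral_indicator measurableSet_Iic]
    have hset : Set.Ioc 0 d ∩ Set.Iic u = Set.Ioc 0 u := by
      ext s
      simp only [Set.mem_inter_iff, Set.mem_Iic, Set.mem_Ioc]
      constructor
      · rintro ⟨⟨h1, h2⟩, h3⟩; exact ⟨h1, h3⟩
      · rintro ⟨h1, h2⟩; exact ⟨⟨h1, h2.trans hu.2⟩, h2⟩
    rw [hset, hF]
    exact (intervalIntegral.integral_of_le hu.1.le).symm
  -- inner integral right
  have hright : ∫ s, ∫ u, K u s ∂μ ∂μ = ∫ s in Set.Ioc (0:ℝ) d, h' s * (d - s) := by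
    refine setIntegral_congr_fun measurableSet_Ioc (fun s hs => ?_)
    have : (fun u => K u s) = Set.indicator (Set.Ici s) (fun _ => h' s) := by
      funext u; simp [hK, Set.indicator, Set.mem_Ici]
    rw [this, hμ, setIntegral_indicator measurableSet_Ici]
    have hset : Set.Ioc 0 d ∩ Set.Ici s = Set.Icc s d := by
      ext u
      simp only [Set.mem_inter_iff, Set.mem_Ici, Set.mem_Ioc, Set.mem_Icc]
      constructor
      · rintro ⟨⟨h1, h2⟩, h3⟩; exact ⟨h3, h2⟩
      · rintro ⟨h1, h2⟩; exact ⟨⟨hs.1.trans_le h1, h2⟩, h1⟩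
    rw [hset, setIntegral_const, Real.volume_real_Icc_of_le (by linarith [hs.2] : s ≤ d), smul_eq_mul]
    ring
  -- key identity
  have hkey : ∫ u in Set.Ioc (0:ℝ) d, F u = ∫ s in Set.Ioc (0:ℝ) d, h' s * (d - s) := by
    rw [← hleft, ← hright]; exact hswap
  -- LHS computation
  have hFcont : ContinuousOn F (Set.Icc 0 d) := by
    have hIcc : IntegrableOn h' (Set.Icc 0 d) := by
      rwa [integrableOn_Icc_iff_integrableOn_Ioc]
    have := intervalIntegral.continuousOn_primitive (f := h') (a := 0) (b := d) (μ := volume) hIcc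
    refine this.congr (fun x hx => ?_)
    rw [hF]; exact intervalIntegral.integral_of_le hx.1
  have hFint : IntervalIntegrable F volume 0 d := by
    apply ContinuousOn.intervalIntegrable
    rwa [Set.uIcc_of_le hd.le]
  have hLHS : ∫ u in (0:ℝ)..d, h u = d * h 0 + ∫ s in Set.Ioc (0:ℝ) d, h' s * (d - s) := by
    have h1 : ∫ u in (0:ℝ)..d, h u = ∫ u in (0:ℝ)..d, (h 0 + F u) := by
      refine intervalIntegral.integral_congr (fun u hu => ?_)
      rw [Set.uIcc_of_le hd.le] at hu
      exact hh.abs_cont u hu.1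
    rw [h1, intervalIntegral.integral_add (intervalIntegrable_const) hFint,
      intervalIntegral.integral_const, intervalIntegral.integral_of_le hd.le, hkey]
    simp [smul_eq_mul]
  -- RHS computation
  have hRHS : (∫ y in Set.Ioi (0:ℝ), h' y * ((d - min y d) / (d * w y)) * w y)
      = (1 / d) * ∫ s in Set.Ioc (0:ℝ) d, h' s * (d - s) := by
    have hcong : ∀ y ∈ Set.Ioi (0:ℝ),
        h' y * ((d - min y d) / (d * w y)) * w y
          = Set.indicator (Set.Ioc (0:ℝ) d) (fun s => (1 / d) * (h' s * (d - s))) y := by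
      intro y hy
      have hwy : (1:ℝ) ≤ w y := hw.one_le y (le_of_lt hy)
      have hwy0 : w y ≠ 0 := by linarith
      by_cases hyd : y ≤ d
      · rw [Set.indicator_of_mem (Set.mem_Ioc.2 ⟨hy, hyd⟩), min_eq_left hyd]
        field_simp
      · rw [Set.indicator_of_notMem (by simp [Set.mem_Ioc, hyd])]
        rw [min_eq_right (le_of_not_ge hyd)]
        simp
    rw [setIntegral_congr_fun measurableSet_Ioi hcong,
      setIntegral_indicator measurableSet_Ioc]
    have : Set.Ioi (0:ℝ) ∩ Set.Ioc 0 d = Set.Ioc 0 d := by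
      rw [Set.inter_eq_right]; exact Set.Ioc_subset_Ioi_self
    rw [this, integral_const_mul]
  -- assemble
  rw [filiInner, hLHS, hRHS]
  simp only [intervalIntegral.integral_same, mul_zero, add_zero, mul_one]
  field_simp
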